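/- Let L = S ∔ R be a Levi decomposition of a Leibniz algebra with [S, R] = 0 and [J, R] ≠ 0, where J is the maximal S-submodule of I such that Hom_S(S, I) ≡ Hom_S(S, J). Then there exists a Levi subalgebra S₁ of L such that no automorphism of L maps S onto S₁. -/

import Mathlib

open Finset

variable {F L : Type} [Field F] [AddCommGroup L] [Module F L]

/-- The span of all brackets `[a,b]` with `a ∈ A`, `b ∈ B`. -/
def brSpan (br : L →ₗ[F] L →ₗ[F] L) (A B : Submodule F L) : Submodule F L :=
  Submodule.span F {z | ∃ a ∈ A, ∃ b ∈ B, z = br a b}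

/-- The subspace `I` spanned by all squares `[x,x]`. -/
def sqIdeal (br : L →ₗ[F] L →ₗ[F] L) : Submodule F L :=
  Submodule.span F {z | ∃ x : L, z = br x x}

/-- `K` is a two-sided ideal of the Leibniz algebra. -/
def IsIdeal (br : L →ₗ[F] L →ₗ[F] L) (K : Submodule F L) : Prop :=
  ∀ x ∈ K, ∀ y : L, br x y ∈ K ∧ br y x ∈ K

/-- Lower central series of a subspace `K`. -/
def lcs (br : L →ₗ[F] L →ₗ[F] L) (K : Submodule F L) : ℕ → Submodule F L
  | 0 => K
  | n + 1 => brSpan br (lcs br K n) K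

/-- Derived series of a subspace `K`. -/
def derSer (br : L →ₗ[F] L →ₗ[F] L) (K : Submodule F L) : ℕ → Submodule F L
  | 0 => K
  | n + 1 => brSpan br (derSer br K n) (derSer br K n)

def IsNilpotentSub (br : L →ₗ[F] L →ₗ[F] L) (K : Submodule F L) : Prop :=
  ∃ n, lcs br K n = ⊥

def IsSolvableSub (br : L →ₗ[F] L →ₗ[F] L) (K : Submodule F L) : Prop :=
  ∃ n, derSer br K n = ⊥

/-- `N` is the nilradical: the maximal nilpotent ideal. -/
def IsNilradical (br : L →ₗ[F] L →ₗ[F] L) (N : Submodule F L) : Prop :=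
  IsIdeal br N ∧ IsNilpotentSub br N ∧
    ∀ K : Submodule F L, IsIdeal br K → IsNilpotentSub br K → K ≤ N

/-- `R` is the solvable radical: the maximal solvable ideal. -/
def IsSolvRadical (br : L →ₗ[F] L →ₗ[F] L) (R : Submodule F L) : Prop :=
  IsIdeal br R ∧ IsSolvableSub br R ∧
    ∀ K : Submodule F L, IsIdeal br K → IsSolvableSub br K → K ≤ R

/-- `S` is a Lie subalgebra (closed under the bracket, which is antisymmetric on it). -/
def IsLieSubalg (br : L →ₗ[F] L →ₗ[F] L) (S : Submodule F L) : Prop :=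
  (∀ x ∈ S, ∀ y ∈ S, br x y ∈ S) ∧ ∀ x ∈ S, ∀ y ∈ S, br x y = - br y x

/-- `K` is an ideal of the subalgebra `S`. -/
def IsIdealIn (br : L →ₗ[F] L →ₗ[F] L) (S K : Submodule F L) : Prop :=
  K ≤ S ∧ ∀ x ∈ K, ∀ y ∈ S, br x y ∈ K ∧ br y x ∈ K

/-- `S` is a semisimple Lie subalgebra: a Lie subalgebra with no nonzero solvable ideals. -/
def IsSemisimpleSubalg (br : L →ₗ[F] L →ₗ[F] L) (S : Submodule F L) : Prop :=
  IsLieSubalg br S ∧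
    ∀ K : Submodule F L, IsIdealIn br S K → IsSolvableSub br K → K = ⊥

/-- `L = S ∔ R` is a Levi decomposition: `S` a semisimple Lie subalgebra, `R` the solvable
radical, and `L` the direct (vector-space) sum of `S` and `R`. -/
def IsLeviDecomp (br : L →ₗ[F] L →ₗ[F] L) (S R : Submodule F L) : Prop :=
  IsSemisimpleSubalg br S ∧ IsSolvRadical br R ∧ S ⊓ R = ⊥ ∧ S ⊔ R = ⊤

/-- `θ` restricts to an `S`-module homomorphism from `S` into `Tgt`
(the `S`-module structure being the right action). -/
def IsModHom (br : L →ₗ[F] L →ₗ[F] L) (S Tgt : Submodule F L) (θ : L →ₗ[F] L) : Prop :=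
  (∀ x ∈ S, θ x ∈ Tgt) ∧ ∀ x ∈ S, ∀ y ∈ S, θ (br x y) = br (θ x) y

/-- The Levi subalgebra `S_θ = {x + θ(x) : x ∈ S}`. -/
def Stheta (S : Submodule F L) (θ : L →ₗ[F] L) : Set L :=
  {z | ∃ x ∈ S, z = x + θ x}

/-- The exponential of a nilpotent endomorphism `D` with `D ^ n = 0`, as a finite sum. -/
def expSum (D : Module.End F L) (n : ℕ) : Module.End F L :=
  ∑ k ∈ Finset.range n, ((k.factorial : F)⁻¹) • D ^ k

/-- Inner automorphisms: compositions of maps `exp(R_a)` with `a ∈ N`. -/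
inductive IsInnerAut (br : L →ₗ[F] L →ₗ[F] L) (N : Submodule F L) : Module.End F L → Prop
  | id : IsInnerAut br N 1
  | comp (a : L) (ha : a ∈ N) (n : ℕ) (hn : (br.flip a : Module.End F L) ^ n = 0)
      (φ : Module.End F L) (hφ : IsInnerAut br N φ) :
      IsInnerAut br N (expSum (br.flip a) n * φ)

/-- The Levi subalgebra `S` is unique up to conjugation by an inner automorphism. -/
def LeviUnique (br : L →ₗ[F] L →ₗ[F] L) (S R N : Submodule F L) : Prop :=
  ∀ S₁ : Submodule F L, IsLeviDecomp br S₁ R →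
    ∃ φ : Module.End F L, IsInnerAut br N φ ∧ Submodule.map φ S = S₁

/-- `J` is the maximal `S`-submodule of `I` with `Hom_S(S, I) ≡ Hom_S(S, J)`:
the smallest `S`-submodule of `I` containing the image of every `S`-module
homomorphism from `S` into `I`. -/
def IsJmod (br : L →ₗ[F] L →ₗ[F] L) (S J : Submodule F L) : Prop :=
  J ≤ sqIdeal br ∧ (∀ j ∈ J, ∀ s ∈ S, br j s ∈ J) ∧
  (∀ θ : L →ₗ[F] L, IsModHom br S (sqIdeal br) θ → ∀ x ∈ S, θ x ∈ J) ∧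
  ∀ J' : Submodule F L,
    (J' ≤ sqIdeal br ∧ (∀ j ∈ J', ∀ s ∈ S, br j s ∈ J') ∧
      (∀ θ : L →ₗ[F] L, IsModHom br S (sqIdeal br) θ → ∀ x ∈ S, θ x ∈ J')) → J ≤ J'

/-- Membership in `E = {b ∈ N : [S, b] ⊆ I}`. -/
def memE (br : L →ₗ[F] L →ₗ[F] L) (S N : Submodule F L) (b : L) : Prop :=
  b ∈ N ∧ ∀ s ∈ S, br s b ∈ sqIdeal br

/-- The subspace `[S, E]`, the span of all `[s, e]` with `s ∈ S`, `e ∈ E`. -/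
def brSE (br : L →ₗ[F] L →ₗ[F] L) (S N : Submodule F L) : Submodule F L :=
  Submodule.span F {z | ∃ s ∈ S, ∃ e, memE br S N e ∧ z = br s e}

section AuxLemmas

variable (br : L →ₗ[F] L →ₗ[F] L)

lemma aux_sq_mem (x : L) : br x x ∈ sqIdeal br :=
  Submodule.subset_span ⟨x, rfl⟩

lemma aux_br_sq_zero (leib : ∀ x y z : L, br x (br y z) = br (br x y) z - br (br x z) y)
    (y : L) : ∀ i ∈ sqIdeal br, br y i = 0 := by
  intro i hi
  have h : sqIdeal br ≤ LinearMap.ker (br y) := by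
    rw [sqIdeal, Submodule.span_le]
    rintro z ⟨x, rfl⟩
    simp only [SetLike.mem_coe, LinearMap.mem_ker]
    rw [leib y x x, sub_self]
  simpa using h hi

lemma aux_sum_mem (a b : L) : br a b + br b a ∈ sqIdeal br := by
  have h : br a b + br b a = br (a + b) (a + b) - br a a - br b b := by
    simp only [map_add, LinearMap.add_apply]
    abel
  rw [h]
  exact sub_mem (sub_mem (aux_sq_mem br _) (aux_sq_mem br _)) (aux_sq_mem br _)

lemma aux_brI_mem (leib : ∀ x y z : L, br x (br y z) = br (br x y) z - br (br x z) y) :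
    ∀ i ∈ sqIdeal br, ∀ y : L, br i y ∈ sqIdeal br := by
  intro i hi y
  have h0 : br y i = 0 := aux_br_sq_zero br leib y i hi
  simpa [h0] using aux_sum_mem br i y

lemma aux_sqIdeal_ideal (leib : ∀ x y z : L, br x (br y z) = br (br x y) z - br (br x z) y) :
    IsIdeal br (sqIdeal br) := by
  intro x hx y
  refine ⟨aux_brI_mem br leib x hx y, ?_⟩
  rw [aux_br_sq_zero br leib y x hx]
  exact Submodule.zero_mem _

lemma aux_sqIdeal_solvable (leib : ∀ x y z : L, br x (br y z) = br (br x y) z - br (br x z) y) :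
    IsSolvableSub br (sqIdeal br) := by
  refine ⟨1, eq_bot_iff.mpr ?_⟩
  show brSpan br (sqIdeal br) (sqIdeal br) ≤ ⊥
  rw [brSpan, Submodule.span_le]
  rintro z ⟨a, ha, b, hb, rfl⟩
  simp only [SetLike.mem_coe, Submodule.mem_bot]
  exact aux_br_sq_zero br leib a b hb

lemma aux_brSpan_mono {A A' B B' : Submodule F L} (h1 : A ≤ A') (h2 : B ≤ B') :
    brSpan br A B ≤ brSpan br A' B' := by
  rw [brSpan, Submodule.span_le]
  rintro z ⟨a, ha, b, hb, rfl⟩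
  exact Submodule.subset_span ⟨a, h1 ha, b, h2 hb, rfl⟩

lemma aux_brSpan_map_le (f : L →ₗ[F] L) (A B : Submodule F L)
    (hf : ∀ a ∈ A, ∀ b ∈ B, f (br a b) = br (f a) (f b)) :
    brSpan br (A.map f) (B.map f) ≤ (brSpan br A B).map f := by
  rw [brSpan, Submodule.span_le]
  rintro z ⟨a, ha, b, hb, rfl⟩
  obtain ⟨a', ha', rfl⟩ := Submodule.mem_map.mp ha
  obtain ⟨b', hb', rfl⟩ := Submodule.mem_map.mp hb
  exact Submodule.mem_map.mpr
    ⟨br a' b', Submodule.subset_span ⟨a', ha', b', hb', rfl⟩, (hf a' ha' b' hb')⟩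

lemma aux_derSer_le (A C : Submodule F L) (hAC : A ≤ C)
    (hC : ∀ a ∈ C, ∀ b ∈ C, br a b ∈ C) : ∀ n, derSer br A n ≤ C := by
  intro n
  induction n with
  | zero => exact hAC
  | succ n ih =>
    show brSpan br (derSer br A n) (derSer br A n) ≤ C
    rw [brSpan, Submodule.span_le]
    rintro z ⟨a, ha, b, hb, rfl⟩
    exact hC a (ih ha) b (ih hb)

lemma aux_derSer_map_le (f : L →ₗ[F] L) (A C : Submodule F L)
    (hAC : ∀ n, derSer br A n ≤ C)
    (hf : ∀ a ∈ C, ∀ b ∈ C, f (br a b) = br (f a) (f b)) :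
    ∀ n, derSer br (A.map f) n ≤ (derSer br A n).map f := by
  intro n
  induction n with
  | zero => exact le_rfl
  | succ n ih =>
    calc derSer br (A.map f) (n + 1)
        = brSpan br (derSer br (A.map f) n) (derSer br (A.map f) n) := rfl
      _ ≤ brSpan br ((derSer br A n).map f) ((derSer br A n).map f) :=
          aux_brSpan_mono br ih ih
      _ ≤ (brSpan br (derSer br A n) (derSer br A n)).map f :=
          aux_brSpan_map_le br f _ _ (fun a ha b hb => hf a (hAC n ha) b (hAC n hb))
      _ = (derSer br A (n + 1)).map f := rfl

lemma aux_map_radical (φ : L ≃ₗ[F] L) (hφ : ∀ x y : L, φ (br x y) = br (φ x) (φ y))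
    (R : Submodule F L) (hR : IsSolvRadical br R) :
    R.map (φ : L →ₗ[F] L) = R := by
  have key : ∀ ψ : L ≃ₗ[F] L, (∀ x y : L, ψ (br x y) = br (ψ x) (ψ y)) →
      R.map (ψ : L →ₗ[F] L) ≤ R := by
    intro ψ hψ
    apply hR.2.2
    · intro x hx y
      obtain ⟨r, hr, rfl⟩ := Submodule.mem_map.mp hx
      constructor
      · refine Submodule.mem_map.mpr ⟨br r (ψ.symm y), (hR.1 r hr (ψ.symm y)).1, ?_⟩
        rw [LinearEquiv.coe_coe, hψ, LinearEquiv.apply_symm_apply]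
      · refine Submodule.mem_map.mpr ⟨br (ψ.symm y) r, (hR.1 r hr (ψ.symm y)).2, ?_⟩
        rw [LinearEquiv.coe_coe, hψ, LinearEquiv.apply_symm_apply]
    · obtain ⟨n, hn⟩ := hR.2.1
      refine ⟨n, le_bot_iff.mp ?_⟩
      have h := aux_derSer_map_le br (ψ : L →ₗ[F] L) R ⊤ (fun _ => le_top)
        (fun a _ b _ => hψ a b) n
      rw [hn] at h
      simpa using h
  have hsymm : ∀ x y : L, φ.symm (br x y) = br (φ.symm x) (φ.symm y) := by
    intro x y
    apply φ.injective
    rw [hφ]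
    simp
  refine le_antisymm (key φ hφ) ?_
  intro x hx
  have hx' : φ.symm x ∈ R := key φ.symm hsymm (Submodule.mem_map.mpr ⟨x, hx, rfl⟩)
  exact Submodule.mem_map.mpr ⟨φ.symm x, hx', by simp⟩

end AuxLemmas
theorem exists_nonconjugate_levi (F L : Type) [Field F] [CharZero F]
    [AddCommGroup L] [Module F L] [FiniteDimensional F L]
    (br : L →ₗ[F] L →ₗ[F] L)
    (leib : ∀ x y z : L, br x (br y z) = br (br x y) z - br (br x z) y)
    (S R J : Submodule F L)
    (hLevi : IsLeviDecomp br S R) (hJ : IsJmod br S J)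
    (hSR : ∀ s ∈ S, ∀ r ∈ R, br s r = 0)
    (hJR : ∃ j ∈ J, ∃ r ∈ R, br j r ≠ 0) :
    ∃ S₁ : Submodule F L, IsLeviDecomp br S₁ R ∧
      ∀ φ : L ≃ₗ[F] L, (∀ x y : L, φ (br x y) = br (φ x) (φ y)) →
        Submodule.map (φ : L →ₗ[F] L) S ≠ S₁ := by
  classical
  obtain ⟨hSsem, hR, hSRbot, hSRtop⟩ := hLevi
  have hIR : sqIdeal br ≤ R :=
    hR.2.2 _ (aux_sqIdeal_ideal br leib) (aux_sqIdeal_solvable br leib)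
  have hJI : J ≤ sqIdeal br := hJ.1
  have hJRle : J ≤ R := hJI.trans hIR
  have hbr0 : ∀ y : L, ∀ i ∈ sqIdeal br, br y i = 0 := aux_br_sq_zero br leib
  -- the submodule V = {v ∈ J : [v, R] = 0}
  let V : Submodule F L :=
    { carrier := {v | v ∈ J ∧ ∀ r ∈ R, br v r = 0}
      add_mem' := fun {a b} ha hb => ⟨J.add_mem ha.1 hb.1, fun r hr => by
        rw [map_add, LinearMap.add_apply, ha.2 r hr, hb.2 r hr, add_zero]⟩
      zero_mem' := ⟨J.zero_mem, fun r hr => by rw [map_zero, LinearMap.zero_apply]⟩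
      smul_mem' := fun c a ha => ⟨J.smul_mem c ha.1, fun r hr => by
        rw [map_smul, LinearMap.smul_apply, ha.2 r hr, smul_zero]⟩ }
  -- find θ with some image not killing R
  have hθex : ∃ θ : L →ₗ[F] L, IsModHom br S (sqIdeal br) θ ∧
      ∃ x₀ ∈ S, ∃ r₀ ∈ R, br (θ x₀) r₀ ≠ 0 := by
    by_contra hcon
    push_neg at hcon
    obtain ⟨j, hjJ, r, hrR, hjr⟩ := hJR
    have hVle : J ≤ V := by
      apply hJ.2.2.2
      refine ⟨fun v hv => hJI hv.1, ?_, ?_⟩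
      · rintro v ⟨hvJ, hvr⟩ s hs
        refine ⟨hJ.2.1 v hvJ s hs, fun r hr => ?_⟩
        have h := leib v s r
        rw [hSR s hs r hr, hvr r hr, map_zero, map_zero, LinearMap.zero_apply] at h
        rw [← sub_zero (br (br v s) r), ← h]
      · intro θ hθ x hx
        exact ⟨hJ.2.2.1 θ hθ x hx, fun r hr => hcon θ hθ x hx r hr⟩
    exact hjr ((hVle hjJ).2 r hrR)
  obtain ⟨θ, hθ, x₀, hx₀, r₀, hr₀, hbrne⟩ := hθex
  set ψ : L →ₗ[F] L := LinearMap.id + θ with hψdef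
  have hψ : ∀ x : L, ψ x = x + θ x := fun x => rfl
  have hθJ : ∀ x ∈ S, θ x ∈ J := hJ.2.2.1 θ hθ
  have hθI : ∀ x ∈ S, θ x ∈ sqIdeal br := fun x hx => hJI (hθJ x hx)
  have hθR : ∀ x ∈ S, θ x ∈ R := fun x hx => hJRle (hθJ x hx)
  -- bracket formula on S₁
  have hbrS1 : ∀ x ∈ S, ∀ y ∈ S, br (ψ x) (ψ y) = ψ (br x y) := by
    intro x hx y hy
    rw [hψ x, hψ y, hψ (br x y)]
    simp only [map_add, LinearMap.add_apply]
    rw [hbr0 x _ (hθI y hy), hbr0 (θ x) _ (hθI y hy), ← hθ.2 x hx y hy]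
    abel
  set S₁ : Submodule F L := S.map ψ with hS₁def
  -- the projection onto S along R
  have hcompl : IsCompl S R := ⟨disjoint_iff.mpr hSRbot, codisjoint_iff.mpr hSRtop⟩
  set p : L →ₗ[F] L := S.subtype ∘ₗ (S.projectionOnto R hcompl) with hpdef
  have hpSmem : ∀ x : L, p x ∈ S := fun x => (S.projectionOnto R hcompl x).2
  have hpS : ∀ s ∈ S, p s = s := by
    intro s hs
    show (S.subtype) (S.projectionOnto R hcompl s) = s
    rw [show s = ((⟨s, hs⟩ : S) : L) from rfl,
      Submodule.linearProjOfIsCompl_apply_left hcompl ⟨s, hs⟩]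
    rfl
  have hpR : ∀ r ∈ R, p r = 0 := by
    intro r hr
    show (S.subtype) (S.projectionOnto R hcompl r) = 0
    rw [show r = ((⟨r, hr⟩ : R) : L) from rfl,
      Submodule.linearProjOfIsCompl_apply_right hcompl ⟨r, hr⟩]
    rfl
  have hpψ : ∀ x ∈ S, p (ψ x) = x := by
    intro x hx
    rw [hψ x, map_add, hpS x hx, hpR _ (hθR x hx), add_zero]
  -- S₁ is a Lie subalgebra
  have hS1lie : IsLieSubalg br S₁ := by
    constructor
    · intro z hz w hw
      obtain ⟨x, hx, rfl⟩ := Submodule.mem_map.mp hz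
      obtain ⟨y, hy, rfl⟩ := Submodule.mem_map.mp hw
      rw [hbrS1 x hx y hy]
      exact Submodule.mem_map.mpr ⟨br x y, hSsem.1.1 x hx y hy, rfl⟩
    · intro z hz w hw
      obtain ⟨x, hx, rfl⟩ := Submodule.mem_map.mp hz
      obtain ⟨y, hy, rfl⟩ := Submodule.mem_map.mp hw
      rw [hbrS1 x hx y hy, hbrS1 y hy x hx, hSsem.1.2 x hx y hy, map_neg]
  -- p is a bracket homomorphism on S₁
  have hpbr : ∀ a ∈ S₁, ∀ b ∈ S₁, p (br a b) = br (p a) (p b) := by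
    intro a ha b hb
    obtain ⟨x, hx, rfl⟩ := Submodule.mem_map.mp ha
    obtain ⟨y, hy, rfl⟩ := Submodule.mem_map.mp hb
    rw [hbrS1 x hx y hy, hpψ x hx, hpψ y hy, hpψ _ (hSsem.1.1 x hx y hy)]
  -- S₁ is semisimple
  have hS1ss : IsSemisimpleSubalg br S₁ := by
    refine ⟨hS1lie, ?_⟩
    intro K hK hKsolv
    have hKS1 : K ≤ S₁ := hK.1
    have hKcl : ∀ a ∈ K, ∀ b ∈ K, br a b ∈ K := fun a ha b hb => (hK.2 a ha b (hKS1 hb)).1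
    have hDK : ∀ n, derSer br K n ≤ K := aux_derSer_le br K K le_rfl hKcl
    have hK'ideal : IsIdealIn br S (K.map p) := by
      constructor
      · intro z hz
        obtain ⟨k, _, rfl⟩ := Submodule.mem_map.mp hz
        exact hpSmem k
      · intro z hz y hy
        obtain ⟨k, hk, rfl⟩ := Submodule.mem_map.mp hz
        obtain ⟨x, hx, rfl⟩ := Submodule.mem_map.mp (hKS1 hk)
        have hyS1 : ψ y ∈ S₁ := Submodule.mem_map.mpr ⟨y, hy, rfl⟩
        have h1 : br (ψ x) (ψ y) ∈ K := (hK.2 _ hk _ hyS1).1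
        have h2 : br (ψ y) (ψ x) ∈ K := (hK.2 _ hk _ hyS1).2
        constructor
        · refine Submodule.mem_map.mpr ⟨br (ψ x) (ψ y), h1, ?_⟩
          rw [hpbr _ (hKS1 hk) _ hyS1, hpψ x hx, hpψ y hy]
        · refine Submodule.mem_map.mpr ⟨br (ψ y) (ψ x), h2, ?_⟩
          rw [hpbr _ hyS1 _ (hKS1 hk), hpψ x hx, hpψ y hy]
    have hK'solv : IsSolvableSub br (K.map p) := by
      obtain ⟨n, hn⟩ := hKsolv
      refine ⟨n, le_bot_iff.mp ?_⟩
      have h := aux_derSer_map_le br p K S₁ (fun m => (hDK m).trans hKS1) hpbr n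
      rw [hn] at h
      simpa using h
    have hK'bot : K.map p = ⊥ := hSsem.2 _ hK'ideal hK'solv
    rw [eq_bot_iff]
    intro k hk
    obtain ⟨x, hx, rfl⟩ := Submodule.mem_map.mp (hKS1 hk)
    have hm : p (ψ x) ∈ K.map p := Submodule.mem_map.mpr ⟨_, hk, rfl⟩
    rw [hK'bot, Submodule.mem_bot, hpψ x hx] at hm
    rw [Submodule.mem_bot, hm, map_zero]
  -- S₁ ⊓ R = ⊥
  have hS1Rbot : S₁ ⊓ R = ⊥ := by
    rw [eq_bot_iff]
    intro z hz
    obtain ⟨hz1, hz2⟩ := Submodule.mem_inf.mp hz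
    obtain ⟨x, hx, rfl⟩ := Submodule.mem_map.mp hz1
    have hxR : x ∈ R := by
      have he : x = ψ x - θ x := by rw [hψ x]; abel
      rw [he]
      exact R.sub_mem hz2 (hθR x hx)
    have hx0 : x ∈ S ⊓ R := Submodule.mem_inf.mpr ⟨hx, hxR⟩
    rw [hSRbot, Submodule.mem_bot] at hx0
    rw [Submodule.mem_bot, hx0, map_zero]
  -- S₁ ⊔ R = ⊤
  have hS1Rtop : S₁ ⊔ R = ⊤ := by
    rw [eq_top_iff]
    intro z _
    have hz : z ∈ S ⊔ R := by rw [hSRtop]; exact Submodule.mem_top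
    obtain ⟨s, hs, r, hr, rfl⟩ := Submodule.mem_sup.mp hz
    have he : s + r = ψ s + (r - θ s) := by rw [hψ s]; abel
    rw [he]
    exact Submodule.add_mem _
      (Submodule.mem_sup_left (Submodule.mem_map.mpr ⟨s, hs, rfl⟩))
      (Submodule.mem_sup_right (R.sub_mem hr (hθR s hs)))
  refine ⟨S₁, ⟨hS1ss, hR, hS1Rbot, hS1Rtop⟩, ?_⟩
  intro φ hφ hmap
  have hφR : R.map (φ : L →ₗ[F] L) = R := aux_map_radical br φ hφ R hR
  have hr₀' : r₀ ∈ R.map (φ : L →ₗ[F] L) := by rw [hφR]; exact hr₀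
  obtain ⟨r', hr', hre⟩ := Submodule.mem_map.mp hr₀'
  have hψx₀ : ψ x₀ ∈ Submodule.map (φ : L →ₗ[F] L) S := by
    rw [hmap]
    exact Submodule.mem_map.mpr ⟨x₀, hx₀, rfl⟩
  obtain ⟨s, hs, hse⟩ := Submodule.mem_map.mp hψx₀
  have h0 : br (ψ x₀) r₀ = 0 := by
    rw [← hse, ← hre]
    show br (φ s) (φ r') = 0
    rw [← hφ s r', hSR s hs r' hr', map_zero]
  have h1 : br (ψ x₀) r₀ = br (θ x₀) r₀ := by
    rw [hψ x₀, map_add, LinearMap.add_apply, hSR x₀ hx₀ r₀ hr₀, zero_add]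
  rw [h1] at h0
  exact hbrne h0
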